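/- (Alexandrov) Let n ≥ 3. Let F : ℝⁿ → ℝⁿ be a bijection such that for all p, q ∈ ℝⁿ: g(p − q, p − q) = 0 implies g(F(p) − F(q), F(p) − F(q)) = 0 and g(F⁻¹(p) − F⁻¹(q), F⁻¹(p) − F⁻¹(q)) = 0. Then F is the composition of a Poincaré transformation with a dilation: there exist λ > 0, a vector m ∈ ℝⁿ, and a linear map Λ : ℝⁿ → ℝⁿ satisfying g(Λv, Λw) = g(v, w) for all v, w, such that F(p) = λ·Λ(p) + m for all p ∈ ℝⁿ. -/

import Mathlib

noncomputable def minkG {n : ℕ} (v w : Fin n → ℝ) : ℝ :=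
  ∑ i : Fin n, if (i : ℕ) = 0 then v i * w i else -(v i * w i)

namespace Alx

variable {n : ℕ}

lemma g_comm (v w : Fin n → ℝ) : minkG v w = minkG w v := by
  unfold minkG; apply Finset.sum_congr rfl; intros; split <;> ring

lemma g_add_left (u v w : Fin n → ℝ) : minkG (u + v) w = minkG u w + minkG v w := by
  unfold minkG; rw [← Finset.sum_add_distrib]; apply Finset.sum_congr rfl; intro i _
  simp only [Pi.add_apply]; split <;> ring

lemma g_smul_left (c : ℝ) (u w : Fin n → ℝ) : minkG (c • u) w = c * minkG u w := by
  unfold minkG; rw [Finset.mul_sum]; apply Finset.sum_congr rfl; intro i _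
  simp only [Pi.smul_apply, smul_eq_mul]; split <;> ring

lemma g_neg_left (u w : Fin n → ℝ) : minkG (-u) w = -minkG u w := by
  have := g_smul_left (-1 : ℝ) u w; simpa using this

lemma g_sub_left (u v w : Fin n → ℝ) : minkG (u - v) w = minkG u w - minkG v w := by
  rw [sub_eq_add_neg, g_add_left, g_neg_left]; ring

lemma g_add_right (u v w : Fin n → ℝ) : minkG u (v + w) = minkG u v + minkG u w := by
  rw [g_comm, g_add_left, g_comm v u, g_comm w u]

lemma g_smul_right (c : ℝ) (u w : Fin n → ℝ) : minkG u (c • w) = c * minkG u w := by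
  rw [g_comm, g_smul_left, g_comm]

lemma g_sub_right (u v w : Fin n → ℝ) : minkG u (v - w) = minkG u v - minkG u w := by
  rw [g_comm, g_sub_left, g_comm v u, g_comm w u]

lemma g_zero_left (w : Fin n → ℝ) : minkG 0 w = 0 := by
  have := g_smul_left (0:ℝ) 0 w; simpa using this

lemma g_zero_right (w : Fin n → ℝ) : minkG w 0 = 0 := by rw [g_comm, g_zero_left]

variable {m : ℕ}

/-- two-term formula, dimension `m+3` so `0` index exists -/
lemma g_formula (v w : Fin (m+3) → ℝ) :
    minkG v w = 2 * (v 0 * w 0) - ∑ i, v i * w i := by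
  unfold minkG
  have h1 : (∑ i : Fin (m+3), if (i:ℕ) = 0 then v i * w i else -(v i * w i))
      = ∑ i : Fin (m+3), ((if (i:ℕ) = 0 then 2 * (v i * w i) else 0) - v i * w i) := by
    apply Finset.sum_congr rfl; intro i _; split <;> ring
  rw [h1, Finset.sum_sub_distrib]
  congr 1
  · rw [Finset.sum_eq_single (0 : Fin (m+3))]
    · simp
    · intro i _ hne
      have : ¬ ((i:ℕ) = 0) := fun hc => hne (Fin.ext hc)
      simp [this]
    · intro h; simp at h


lemma sumsq (v : Fin (m+3) → ℝ) : ∑ i, v i * v i = 2*(v 0)^2 - minkG v v := by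
  rw [g_formula]; ring

lemma eq_zero_of_sumsq {v : Fin (m+3) → ℝ} (h : ∑ i, v i * v i = 0) : v = 0 := by
  funext i
  have hnn : ∀ j ∈ Finset.univ, 0 ≤ v j * v j := fun j _ => mul_self_nonneg _
  have := (Finset.sum_eq_zero_iff_of_nonneg hnn).1 h i (Finset.mem_univ i)
  simpa using mul_self_eq_zero.1 this

lemma null_zero_of_time {v : Fin (m+3) → ℝ} (hv : minkG v v = 0) (h0 : v 0 = 0) : v = 0 := by
  apply eq_zero_of_sumsq; rw [sumsq, hv, h0]; ring

lemma null_time_ne {v : Fin (m+3) → ℝ} (hv : minkG v v = 0) (hne : v ≠ 0) : v 0 ≠ 0 :=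
  fun h0 => hne (null_zero_of_time hv h0)

lemma null_orth {u v : Fin (m+3) → ℝ} (hu : minkG u u = 0) (hv : minkG v v = 0)
    (huv : minkG u v = 0) (hvne : v ≠ 0) : ∃ c : ℝ, u = c • v := by
  set w := v 0 • u - u 0 • v with hwdef
  have hw0 : w 0 = 0 := by simp [hwdef]; ring
  have hgw : minkG w w = 0 := by
    simp only [hwdef, g_sub_left, g_sub_right, g_smul_left, g_smul_right]
    rw [g_comm v u]; rw [hu, hv, huv]; ring
  have hwz : w = 0 := null_zero_of_time hgw hw0
  have hv0 : v 0 ≠ 0 := null_time_ne hv hvne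
  refine ⟨u 0 / v 0, funext fun i => ?_⟩
  have hwi := congrFun hwz i
  simp [hwdef, sub_eq_zero] at hwi
  simp only [Pi.smul_apply, smul_eq_mul]
  field_simp
  linarith [hwi]

lemma timelike_time_ne {v : Fin (m+3) → ℝ} (hv : 0 < minkG v v) : v 0 ≠ 0 := by
  intro h0
  have h := sumsq v
  have hnn : 0 ≤ ∑ i, v i * v i := Finset.sum_nonneg (fun j _ => mul_self_nonneg _)
  rw [h0] at h; nlinarith

lemma ortho_timelike {τ x : Fin (m+3) → ℝ} (ht : 0 < minkG τ τ) (hx : minkG τ x = 0)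
    (hxne : x ≠ 0) : minkG x x < 0 := by
  have ht0 : τ 0 ≠ 0 := timelike_time_ne ht
  set w := τ 0 • x - x 0 • τ with hwdef
  have hw0 : w 0 = 0 := by simp [hwdef]; ring
  have hgw : minkG w w = (τ 0)^2 * minkG x x + (x 0)^2 * minkG τ τ := by
    simp only [hwdef, g_sub_left, g_sub_right, g_smul_left, g_smul_right]
    rw [g_comm x τ]; rw [hx]; ring
  have hle : minkG w w ≤ 0 := by
    have h := sumsq w
    have hnn : 0 ≤ ∑ i, w i * w i := Finset.sum_nonneg (fun j _ => mul_self_nonneg _)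
    rw [hw0] at h; nlinarith
  have hxx : minkG x x ≤ 0 := by nlinarith [sq_nonneg (τ 0), sq_nonneg (x 0), sq_pos_of_ne_zero ht0]
  rcases lt_or_eq_of_le hxx with h | h'
  · exact h
  · exfalso
    have h : minkG x x = 0 := h'
    have hsq : (x 0)^2 ≤ 0 := by nlinarith [sq_pos_of_ne_zero ht0]
    have hx0 : x 0 = 0 := by
      have : (x 0)^2 = 0 := le_antisymm hsq (sq_nonneg _)
      exact pow_eq_zero_iff (by norm_num) |>.1 this
    exact hxne (null_zero_of_time h hx0)

lemma pos_orth {u v : Fin (m+3) → ℝ} (hu : 0 < minkG u u) (hv : 0 < minkG v v)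
    (huv : minkG u v = 0) : False := by
  have hvne : v ≠ 0 := by intro h; rw [h, g_zero_left] at hv; linarith
  have := ortho_timelike hu huv hvne
  linarith

lemma spacelike_ne_zero {v : Fin (m+3) → ℝ} (hv : minkG v v < 0) : v ≠ 0 := by
  intro h; rw [h, g_zero_left] at hv; linarith


lemma g_single_left (i : Fin (m+3)) (a : ℝ) (w : Fin (m+3) → ℝ) :
    minkG (Pi.single i a) w = if (i:ℕ) = 0 then a * w i else -(a * w i) := by
  unfold minkG
  rw [Finset.sum_eq_single i]
  · simp
  · intro j _ hne
    rw [Pi.single_eq_of_ne hne]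
    split <;> ring
  · simp

/-- the linear functional `x ↦ g b x` -/
noncomputable def gLin (b : Fin (m+3) → ℝ) : (Fin (m+3) → ℝ) →ₗ[ℝ] ℝ where
  toFun := fun x => minkG b x
  map_add' := fun x y => g_add_right b x y
  map_smul' := fun c x => by simp [g_smul_right]

lemma exists_ker2 (f₁ f₂ : (Fin (m+3) → ℝ) →ₗ[ℝ] ℝ) :
    ∃ x : Fin (m+3) → ℝ, x ≠ 0 ∧ f₁ x = 0 ∧ f₂ x = 0 := by
  by_contra h
  push_neg at h
  have hinj : Function.Injective (f₁.prod f₂) := by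
    rw [← LinearMap.ker_eq_bot, LinearMap.ker_eq_bot']
    intro x hx
    by_contra hxne
    have h1 : f₁ x = 0 := congrArg Prod.fst hx
    have h2 : f₂ x = 0 := congrArg Prod.snd hx
    exact (h x hxne h1) h2
  have hle := LinearMap.finrank_le_finrank_of_injective hinj
  rw [Module.finrank_fin_fun] at hle
  have : Module.finrank ℝ (ℝ × ℝ) = 2 := by
    simp [Module.finrank_prod]
  rw [this] at hle; omega

lemma exists_timelike_orth {w : Fin (m+3) → ℝ} (hw : minkG w w < 0) :
    ∃ τ, 0 < minkG τ τ ∧ minkG τ w = 0 := by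
  refine ⟨(w 0) • w - (minkG w w) • (Pi.single 0 1 : Fin (m+3) → ℝ), ?_, ?_⟩
  · have h00 : minkG (Pi.single (0 : Fin (m+3)) (1:ℝ)) (Pi.single (0:Fin (m+3)) (1:ℝ)) = 1 := by
      rw [g_single_left]; simp
    have h0w : minkG (Pi.single (0 : Fin (m+3)) (1:ℝ)) w = w 0 := by
      rw [g_single_left]; simp
    have hw0 : minkG w (Pi.single (0 : Fin (m+3)) (1:ℝ)) = w 0 := by rw [g_comm]; exact h0w
    simp only [g_sub_left, g_sub_right, g_smul_left, g_smul_right, h00, h0w, hw0]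
    nlinarith [sq_nonneg (w 0), hw]
  · have h0w : minkG (Pi.single (0 : Fin (m+3)) (1:ℝ)) w = w 0 := by
      rw [g_single_left]; simp
    simp only [g_sub_left, g_smul_left, h0w]
    ring

lemma exists_null_orth {w : Fin (m+3) → ℝ} (hw : minkG w w < 0) :
    ∃ ν : Fin (m+3) → ℝ, minkG ν ν = 0 ∧ ν ≠ 0 ∧ minkG ν w = 0 := by
  obtain ⟨τ, hτ, hτw⟩ := exists_timelike_orth hw
  obtain ⟨x, hxne, hwx, hτx⟩ := exists_ker2 (gLin w) (gLin τ)
  have hwx : minkG w x = 0 := hwx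
  have hτx : minkG τ x = 0 := hτx
  have hxsp : minkG x x < 0 := ortho_timelike hτ hτx hxne
  set lam := Real.sqrt (minkG τ τ / (- minkG x x)) with hlam
  have hlam2 : lam^2 = minkG τ τ / (- minkG x x) :=
    Real.sq_sqrt (div_nonneg (le_of_lt hτ) (by linarith))
  refine ⟨lam • x + τ, ?_, ?_, ?_⟩
  · have hxτ : minkG x τ = 0 := by rw [g_comm]; exact hτx
    have hkey : lam^2 * minkG x x = - minkG τ τ := by
      have hne : (- minkG x x) ≠ 0 := by linarith
      rw [hlam2]; field_simp
      rw [div_self (by linarith)]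
    simp only [g_add_left, g_add_right, g_smul_left, g_smul_right, hxτ, hτx]
    linear_combination hkey
  · intro hz
    have hτeq : τ = (-lam) • x := by
      have h1 : τ = -(lam • x) := by linear_combination (norm := module) hz
      rw [h1]; module
    have hcon : minkG τ τ = lam^2 * minkG x x := by
      rw [hτeq, g_smul_left, g_smul_right]; ring
    nlinarith [sq_nonneg lam, hxsp, hτ]
  · have hxw : minkG x w = 0 := by rw [g_comm]; exact hwx
    simp only [g_add_left, g_smul_left, hxw, hτw]; ring


/-- If `c` is `g`-orthogonal to every nonzero null vector orthogonal to a spacelike `w`,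
then `c` is a multiple of `w`. -/
lemma spanNull {w c : Fin (m+3) → ℝ} (hw : minkG w w < 0)
    (hc : ∀ v : Fin (m+3) → ℝ, minkG v v = 0 → v ≠ 0 → minkG v w = 0 → minkG c v = 0) :
    ∃ β : ℝ, c = β • w := by
  obtain ⟨τ, hτ, hτw⟩ := exists_timelike_orth hw
  -- main claim: for every nonzero x orthogonal to w and τ, we get g c x = 0 and g c τ = 0
  have claim : ∀ x : Fin (m+3) → ℝ, x ≠ 0 → minkG w x = 0 → minkG τ x = 0 →
      minkG c x = 0 ∧ minkG c τ = 0 := by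
    intro x hxne hwx hτx
    have hxsp : minkG x x < 0 := ortho_timelike hτ hτx hxne
    set lam := Real.sqrt (minkG τ τ / (- minkG x x)) with hlam
    have hlam2 : lam^2 = minkG τ τ / (- minkG x x) :=
      Real.sq_sqrt (div_nonneg (le_of_lt hτ) (by linarith))
    have hlampos : 0 < lam := Real.sqrt_pos.2 (div_pos hτ (by linarith))
    have hkey : lam^2 * minkG x x = - minkG τ τ := by
      have hne : (- minkG x x) ≠ 0 := by linarith
      rw [hlam2]; field_simp
      rw [div_self (by linarith)]
    have hxτ : minkG x τ = 0 := by rw [g_comm]; exact hτx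
    have hxw : minkG x w = 0 := by rw [g_comm]; exact hwx
    have hτwx : minkG τ w = 0 := hτw
    have hnull : ∀ ε : ℝ, ε = 1 ∨ ε = -1 →
        minkG ((ε * lam) • x + τ) ((ε * lam) • x + τ) = 0 ∧ ((ε * lam) • x + τ) ≠ 0 ∧
        minkG ((ε * lam) • x + τ) w = 0 := by
      intro ε hε
      have hε2 : ε^2 = 1 := by rcases hε with h | h <;> rw [h] <;> norm_num
      refine ⟨?_, ?_, ?_⟩
      · simp only [g_add_left, g_add_right, g_smul_left, g_smul_right, hxτ, hτx]
        nlinarith [hkey, hε2]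
      · intro hz
        have hτeq : τ = (-(ε * lam)) • x := by
          have h1 : τ = -((ε * lam) • x) := by linear_combination (norm := module) hz
          rw [h1]; module
        have hcon : minkG τ τ = (ε * lam)^2 * minkG x x := by
          rw [hτeq, g_smul_left, g_smul_right]; ring
        nlinarith [sq_nonneg (ε * lam), hxsp, hτ]
      · simp only [g_add_left, g_smul_left, hxw, hτw]; ring
    obtain ⟨hn1, hz1, hw1⟩ := hnull 1 (Or.inl rfl)
    obtain ⟨hn2, hz2, hw2⟩ := hnull (-1) (Or.inr rfl)
    have e1 := hc _ hn1 hz1 hw1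
    have e2 := hc _ hn2 hz2 hw2
    simp only [g_add_right, g_smul_right] at e1 e2
    constructor
    · have : lam * minkG c x = 0 := by linarith
      rcases mul_eq_zero.1 this with h | h
      · exact absurd h (ne_of_gt hlampos)
      · exact h
    · nlinarith [e1, e2]
  -- existence of one x orthogonal to w and τ
  obtain ⟨x₀, hx₀ne, hwx₀, hτx₀⟩ := exists_ker2 (gLin w) (gLin τ)
  have hcτ : minkG c τ = 0 := (claim x₀ hx₀ne hwx₀ hτx₀).2
  set β := minkG w c / minkG w w with hβ
  set c'' := c - β • w with hc''
  have hwc'' : minkG w c'' = 0 := by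
    simp only [hc'', g_sub_right, g_smul_right]
    rw [hβ, div_mul_cancel₀ (minkG w c) (ne_of_lt hw)]; ring
  have hτc'' : minkG τ c'' = 0 := by
    simp only [hc'', g_sub_right, g_smul_right, hτw, hτ]
    rw [g_comm τ c, hcτ]; ring
  by_cases hz : c'' = 0
  · exact ⟨β, by rw [← sub_eq_zero]; exact hz⟩
  · exfalso
    have hcc'' : minkG c c'' = 0 := (claim c'' hz hwc'' hτc'').1
    have hsp : minkG c'' c'' < 0 := ortho_timelike hτ hτc'' hz
    have : minkG c c'' = minkG c'' c'' + β * minkG w c'' := by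
      have hceq : c = c'' + β • w := by rw [hc'']; module
      calc minkG c c'' = minkG (c'' + β • w) c'' := by rw [← hceq]
        _ = minkG c'' c'' + β * minkG w c'' := by rw [g_add_left, g_smul_left]
    rw [hwc''] at this
    nlinarith [hcc'', hsp, this]

/-- characterization of the lightlike hyperplane through `a` with null normal `v`,
purely in terms of lightlike separation. -/
lemma charH {v : Fin (m+3) → ℝ} (hv : minkG v v = 0) (hvne : v ≠ 0) (a x : Fin (m+3) → ℝ) :
    minkG (x - a) v = 0 ↔
      ((∃ t : ℝ, x = a + t • v) ∨
       (∃ u : Fin (m+3) → ℝ, minkG u u = 0 ∧ u ≠ 0 ∧ ∀ t s : ℝ,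
         minkG ((x + t • u) - (a + s • v)) ((x + t • u) - (a + s • v)) ≠ 0)) := by
  constructor
  · intro h
    by_cases hnull : minkG (x - a) (x - a) = 0
    · left
      obtain ⟨c, hcd⟩ := null_orth hnull hv h hvne
      exact ⟨c, by rw [← hcd]; module⟩
    · right
      refine ⟨v, hv, hvne, fun t s => ?_⟩
      have heq : (x + t • v) - (a + s • v) = (x - a) + (t - s) • v := by module
      rw [heq]
      simp only [g_add_left, g_add_right, g_smul_left, g_smul_right, hv, h]
      rw [g_comm v (x-a), h]
      intro hcon; apply hnull; linarith [hcon]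
  · rintro (⟨t, rfl⟩ | ⟨u, hu, hune, hcon⟩)
    · have heq : a + t • v - a = t • v := by module
      rw [heq, g_smul_left, hv]; ring
    · by_contra hne
      set s := minkG (x - a) (x - a) / (2 * minkG (x - a) v) with hs
      apply hcon 0 s
      have heq : (x + (0:ℝ) • u) - (a + s • v) = (x - a) - s • v := by module
      rw [heq]
      simp only [g_sub_left, g_sub_right, g_smul_left, g_smul_right, hv]
      rw [g_comm v x, g_comm v a, hs]
      rw [show minkG (x-a) v = minkG x v - minkG a v from g_sub_left x a v] at hne
      rw [show minkG (x-a) (x-a) = minkG x x - minkG a x - (minkG x a - minkG a a) by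
        simp only [g_sub_left, g_sub_right],
        show minkG (x-a) v = minkG x v - minkG a v from g_sub_left x a v]
      field_simp
      ring

/-- if every null hyperplane through `p` containing direction `d₁` that meets the line
`q + ℝ d₂` contains that whole line, then `d₂ ∥ d₁`.  (`d₁` spacelike.) -/
lemma parDir {d₁ d₂ p q : Fin (m+3) → ℝ} (h1 : minkG d₁ d₁ < 0)
    (hQ : ∀ v : Fin (m+3) → ℝ, minkG v v = 0 → v ≠ 0 → minkG v d₁ = 0 →
      (∃ s : ℝ, minkG (q + s • d₂ - p) v = 0) → ∀ s : ℝ, minkG (q + s • d₂ - p) v = 0) :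
    ∃ c : ℝ, d₂ = c • d₁ := by
  by_cases hall : ∀ v : Fin (m+3) → ℝ, minkG v v = 0 → v ≠ 0 → minkG v d₁ = 0 → minkG d₂ v = 0
  · exact spanNull h1 hall
  · exfalso
    push_neg at hall
    obtain ⟨v, hv, hvne, hvd₁, hvd₂⟩ := hall
    set s₀ := - minkG (q - p) v / minkG d₂ v with hs₀
    have h₀ : minkG (q + s₀ • d₂ - p) v = 0 := by
      have heq : q + s₀ • d₂ - p = (q - p) + s₀ • d₂ := by module
      rw [heq, g_add_left, g_smul_left, hs₀]
      field_simp
      ring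
    have hall2 := hQ v hv hvne hvd₁ ⟨s₀, h₀⟩
    have h₁ := hall2 (s₀ + 1)
    have heq : q + (s₀ + 1) • d₂ - p = (q + s₀ • d₂ - p) + d₂ := by module
    rw [heq, g_add_left, h₀] at h₁
    exact hvd₂ (by linarith)


/-- the property of a bijection preserving lightlike separation in both directions -/
def PresIff (E : (Fin (m+3) → ℝ) ≃ (Fin (m+3) → ℝ)) : Prop :=
  ∀ p q, minkG (p - q) (p - q) = 0 ↔ minkG (E p - E q) (E p - E q) = 0

lemma presIff_symm {E : (Fin (m+3) → ℝ) ≃ (Fin (m+3) → ℝ)} (hIff : PresIff E) :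
    PresIff E.symm := by
  intro p q
  have := hIff (E.symm p) (E.symm q)
  simpa using this.symm

/-- image of a null line: canonical direction `E (a+v) - E a`. -/
lemma nline {E : (Fin (m+3) → ℝ) ≃ (Fin (m+3) → ℝ)} (hIff : PresIff E)
    {v : Fin (m+3) → ℝ} (hv : minkG v v = 0) (hvne : v ≠ 0) (a : Fin (m+3) → ℝ) :
    minkG (E (a+v) - E a) (E (a+v) - E a) = 0 ∧ (E (a+v) - E a) ≠ 0 ∧
    (∀ t : ℝ, ∃ s : ℝ, E (a + t • v) = E a + s • (E (a+v) - E a)) ∧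
    (∀ s : ℝ, ∃ t : ℝ, E a + s • (E (a+v) - E a) = E (a + t • v)) := by
  set d := E (a+v) - E a with hd
  have hnull_line : ∀ t₁ t₂ : ℝ, minkG ((a + t₁ • v) - (a + t₂ • v)) ((a + t₁ • v) - (a + t₂ • v)) = 0 := by
    intro t₁ t₂
    have heq : (a + t₁ • v) - (a + t₂ • v) = (t₁ - t₂) • v := by module
    rw [heq, g_smul_left, g_smul_right, hv]; ring
  have hd0 : minkG d d = 0 := by
    have h := (hIff (a+v) a).1 (by
      have heq : (a + v) - a = v := by module
      rw [heq]; exact hv)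
    exact h
  have hdne : d ≠ 0 := by
    rw [hd, sub_ne_zero]
    intro hc
    have := E.injective hc
    have hvz : v = 0 := by linear_combination (norm := module) this
    exact hvne hvz
  refine ⟨hd0, hdne, ?_, ?_⟩
  · intro t
    set c := E (a + t • v) - E a with hc
    have hcc : minkG c c = 0 := by
      have h := (hIff (a + t • v) a).1 (by
        have heq : (a + t • v) - a = t • v := by module
        rw [heq, g_smul_left, g_smul_right, hv]; ring)
      exact h
    have hcd : minkG (c - d) (c - d) = 0 := by
      have heq : c - d = E (a + t • v) - E (a + v) := by rw [hc, hd]; module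
      rw [heq]
      have h := (hIff (a + t • v) (a + v)).1 (by
        have heq2 : (a + t • v) - (a + v) = (t - 1) • v := by module
        rw [heq2, g_smul_left, g_smul_right, hv]; ring)
      exact h
    have hgcd : minkG c d = 0 := by
      have hexp : minkG (c - d) (c - d) = minkG c c - 2 * minkG c d + minkG d d := by
        simp only [g_sub_left, g_sub_right]
        rw [g_comm d c]; ring
      rw [hcd, hcc, hd0] at hexp
      linarith
    obtain ⟨s, hs⟩ := null_orth hcc hd0 hgcd hdne
    exact ⟨s, by rw [← sub_eq_iff_eq_add']; rw [← hc]; rw [hs]⟩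
  · intro s
    set x := E.symm (E a + s • d) with hx
    have hEx : E x = E a + s • d := by rw [hx]; simp
    have hxa : minkG (x - a) (x - a) = 0 := by
      have h := (hIff x a).2 (by
        rw [hEx]
        have heq : E a + s • d - E a = s • d := by module
        rw [heq, g_smul_left, g_smul_right, hd0]; ring)
      exact h
    have hxav : minkG (x - (a + v)) (x - (a + v)) = 0 := by
      have h := (hIff x (a+v)).2 (by
        have heq : E x - E (a + v) = (s - 1) • d := by rw [hEx, hd]; module
        rw [heq, g_smul_left, g_smul_right, hd0]; ring)
      exact h
    have hxv : minkG (x - a) v = 0 := by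
      have heq : x - (a + v) = (x - a) - v := by module
      rw [heq] at hxav
      simp only [g_sub_left, g_sub_right] at hxav
      rw [g_comm v x, g_comm v a, hv] at hxav
      have hxa' : minkG x x - minkG a x - (minkG x a - minkG a a) = 0 := by
        have h2 := hxa
        simp only [g_sub_left, g_sub_right] at h2
        linarith
      rw [g_sub_left]
      linarith
    obtain ⟨t, ht⟩ := null_orth hxa hv hxv hvne
    refine ⟨t, ?_⟩
    rw [← hEx]
    congr 1
    rw [← ht]; module


/-- transport of null hyperplanes -/
lemma hypTrans {E : (Fin (m+3) → ℝ) ≃ (Fin (m+3) → ℝ)} (hIff : PresIff E)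
    {v : Fin (m+3) → ℝ} (hv : minkG v v = 0) (hvne : v ≠ 0) (a x : Fin (m+3) → ℝ) :
    minkG (x - a) v = 0 ↔ minkG (E x - E a) (E (a+v) - E a) = 0 := by
  obtain ⟨hd0, hdne, hfwd, hbwd⟩ := nline hIff hv hvne a
  rw [charH hv hvne a x, charH hd0 hdne (E a) (E x)]
  constructor
  · rintro (⟨t, rfl⟩ | ⟨u, hu, hune, hcon⟩)
    · left
      obtain ⟨s, hs⟩ := hfwd t
      exact ⟨s, hs⟩
    · right
      obtain ⟨hu0', hune', hfwd', hbwd'⟩ := nline hIff hu hune x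
      refine ⟨E (x+u) - E x, hu0', hune', fun t' s' => ?_⟩
      intro hzero
      obtain ⟨t₁, ht₁⟩ := hbwd' t'
      obtain ⟨s₁, hs₁⟩ := hbwd s'
      rw [show E x + t' • (E (x+u) - E x) = E (x + t₁ • u) from ht₁,
          show E a + s' • (E (a+v) - E a) = E (a + s₁ • v) from hs₁] at hzero
      have := (hIff (x + t₁ • u) (a + s₁ • v)).2 hzero
      exact hcon t₁ s₁ this
  · rintro (⟨s, hsx⟩ | ⟨u', hu', hu'ne, hcon⟩)
    · left
      obtain ⟨t, ht⟩ := hbwd s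
      rw [← hsx] at ht
      exact ⟨t, E.injective ht⟩
    · right
      set u := E.symm (E x + u') - x with hu_def
      have hxu : x + u = E.symm (E x + u') := by rw [hu_def]; module
      have hExu : E (x + u) = E x + u' := by rw [hxu]; simp
      have hu0 : minkG u u = 0 := by
        have h := (hIff (x+u) x).2 (by
          rw [hExu]
          have heq : E x + u' - E x = u' := by module
          rw [heq]; exact hu')
        have heq : x + u - x = u := by module
        rwa [heq] at h
      have hune : u ≠ 0 := by
        intro hz
        rw [hz] at hExu
        simp at hExu
        exact hu'ne hExu
      refine ⟨u, hu0, hune, fun t s => ?_⟩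
      intro hzero
      have hz' := (hIff (x + t • u) (a + s • v)).1 hzero
      obtain ⟨hu0', hune', hfwd', hbwd'⟩ := nline hIff hu0 hune x
      obtain ⟨t₁, ht₁⟩ := hfwd' t
      obtain ⟨s₁, hs₁⟩ := hfwd s
      rw [ht₁, hs₁, hExu] at hz'
      have heq : E x + u' - E x = u' := by module
      rw [heq] at hz'
      exact hcon t₁ s₁ hz'


lemma time0_spacelike {v : Fin (m+3) → ℝ} (h0 : v 0 = 0) (hne : v ≠ 0) : minkG v v < 0 := by
  have hf := g_formula v v
  have hnn : 0 ≤ ∑ i, v i * v i := Finset.sum_nonneg (fun j _ => mul_self_nonneg _)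
  have hne' : ∑ i, v i * v i ≠ 0 := fun h => hne (eq_zero_of_sumsq h)
  have hpos : 0 < ∑ i, v i * v i := lt_of_le_of_ne hnn (Ne.symm hne')
  rw [hf, h0]
  nlinarith

lemma spacelike_combo (x : Fin (m+3) → ℝ) {s : Fin (m+3) → ℝ} (hs : minkG s s < 0) :
    ∃ T : ℝ, 0 < T ∧ minkG (x + T • s) (x + T • s) < 0 ∧
      minkG (x - T • s) (x - T • s) < 0 := by
  set Q := |minkG x x| + 2*|minkG x s| + 1 with hQdef
  have hgs : 0 < -minkG s s := by linarith
  have hQ : 0 < Q := by positivity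
  set T := Q / (-minkG s s) + 1 with hTdef
  have hdiv : 0 ≤ Q / (-minkG s s) := le_of_lt (div_pos hQ hgs)
  have hT1 : 1 ≤ T := by rw [hTdef]; linarith
  have hT0 : 0 < T := by linarith
  have hTQ : Q ≤ T * (-minkG s s) := by
    have hdm : (Q / -minkG s s) * (-minkG s s) = Q := div_mul_cancel₀ Q (ne_of_gt hgs)
    rw [hTdef, add_mul, hdm, one_mul]
    linarith
  have habs1 := le_abs_self (minkG x x)
  have habs2 := le_abs_self (minkG x s)
  have habs3 := neg_abs_le (minkG x s)
  refine ⟨T, hT0, ?_, ?_⟩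
  · simp only [g_add_left, g_add_right, g_smul_left, g_smul_right]
    rw [g_comm s x]
    nlinarith [mul_le_mul_of_nonneg_left hTQ (le_of_lt hT0), mul_le_mul_of_nonneg_left habs2 (le_of_lt hT0), mul_le_mul_of_nonneg_left habs3 (le_of_lt hT0), mul_nonneg (sub_nonneg.2 hT1) (abs_nonneg (minkG x x))]
  · simp only [g_sub_left, g_sub_right, g_smul_left, g_smul_right]
    rw [g_comm s x]
    nlinarith [mul_le_mul_of_nonneg_left hTQ (le_of_lt hT0), mul_le_mul_of_nonneg_left habs2 (le_of_lt hT0), mul_le_mul_of_nonneg_left habs3 (le_of_lt hT0), mul_nonneg (sub_nonneg.2 hT1) (abs_nonneg (minkG x x))]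


/-- image of a spacelike line under a lightcone-preserving bijection is a
(spacelike) line. -/
lemma sline {E : (Fin (m+3) → ℝ) ≃ (Fin (m+3) → ℝ)} (hIff : PresIff E)
    {w : Fin (m+3) → ℝ} (hw : minkG w w < 0) (a : Fin (m+3) → ℝ) :
    minkG (E (a+w) - E a) (E (a+w) - E a) < 0 ∧
    (∀ t : ℝ, ∃ s : ℝ, E (a + t • w) = E a + s • (E (a+w) - E a)) ∧
    (∀ s : ℝ, ∃ t : ℝ, E a + s • (E (a+w) - E a) = E (a + t • w)) := by
  have hIffs : PresIff E.symm := presIff_symm hIff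
  have hwne : w ≠ 0 := spacelike_ne_zero hw
  set D := E (a+w) - E a with hD
  set U : (Fin (m+3) → ℝ) → Prop := fun z => ∀ v : Fin (m+3) → ℝ,
    minkG v v = 0 → v ≠ 0 → minkG v w = 0 → minkG z (E (a+v) - E a) = 0 with hU
  have mem_iff : ∀ x : Fin (m+3) → ℝ, (∃ t : ℝ, x = a + t • w) ↔ U (E x - E a) := by
    intro x
    constructor
    · rintro ⟨t, rfl⟩ v hv hvne hvw
      apply (hypTrans hIff hv hvne a (a + t • w)).1
      have heq : a + t • w - a = t • w := by module
      rw [heq, g_smul_left, g_comm w v, hvw]; ring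
    · intro hx
      have hall : ∀ v : Fin (m+3) → ℝ, minkG v v = 0 → v ≠ 0 → minkG v w = 0 →
          minkG (x - a) v = 0 := by
        intro v hv hvne hvw
        exact (hypTrans hIff hv hvne a x).2 (hx v hv hvne hvw)
      obtain ⟨β, hβ⟩ := spanNull hw hall
      exact ⟨β, by rw [← hβ]; module⟩
  have hU_to_line : ∀ z, U z → ∃ t : ℝ, E a + z = E (a + t • w) := by
    intro z hz
    have hx : U (E (E.symm (E a + z)) - E a) := by
      have : E (E.symm (E a + z)) - E a = z := by simp
      rwa [this]
    obtain ⟨t, ht⟩ := (mem_iff _).2 hx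
    refine ⟨t, ?_⟩
    have := congrArg E ht
    simpa using this
  have hDU : U D := by
    have := (mem_iff (a + w)).1 ⟨1, by module⟩
    have heq : E (a + w) - E a = D := rfl
    rwa [heq] at this
  have hDne : D ≠ 0 := by
    rw [hD, sub_ne_zero]
    intro hc
    have := E.injective hc
    exact hwne (by linear_combination (norm := module) this)
  have hUsmul : ∀ (r : ℝ) z, U z → U (r • z) := by
    intro r z hz v hv hvne hvw
    rw [g_smul_left, hz v hv hvne hvw]; ring
  -- main claim : U z → z ∈ ℝ D
  have claim_sub : ∀ z, U z → ∃ r : ℝ, z = r • D := by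
    intro z hz
    by_contra hcon
    push_neg at hcon
    -- step 1 : find a spacelike u' with U u' and u' ∉ ℝD
    have step1 : ∃ u' : Fin (m+3) → ℝ, minkG u' u' < 0 ∧ U u' ∧ (∀ r : ℝ, u' ≠ r • D) := by
      have hzne : z ≠ 0 := by
        intro h; exact hcon 0 (by rw [h]; module)
      by_cases hD0 : D 0 = 0
      · have hDsp : minkG D D < 0 := time0_spacelike hD0 hDne
        by_cases hz0 : z 0 = 0
        · exact ⟨z, time0_spacelike hz0 hzne, hz, hcon⟩
        · obtain ⟨T, hT0, hTsp, _⟩ := spacelike_combo z hDsp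
          refine ⟨z + T • D, hTsp, ?_, ?_⟩
          · intro v hv hvne hvw
            rw [g_add_left, g_smul_left, hz v hv hvne hvw, hDU v hv hvne hvw]; ring
          · intro r hr
            apply hcon (r - T)
            have : z = (r - T) • D := by
              have h2 : z + T • D = r • D := hr
              linear_combination (norm := module) h2
            exact this
      · set u' := (D 0) • z - (z 0) • D with hu'def
        have hu'0 : u' 0 = 0 := by simp [hu'def]; ring
        have hu'ne : u' ≠ 0 := by
          intro h
          apply hcon (z 0 / D 0)
          have h2 : (D 0) • z = (z 0) • D := by
            have := h
            rw [hu'def, sub_eq_zero] at this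
            exact this
          funext i
          have := congrFun h2 i
          simp only [Pi.smul_apply, smul_eq_mul] at this ⊢
          field_simp
          linarith
        refine ⟨u', time0_spacelike hu'0 hu'ne, ?_, ?_⟩
        · intro v hv hvne hvw
          rw [hu'def, g_sub_left, g_smul_left, g_smul_left,
            hz v hv hvne hvw, hDU v hv hvne hvw]; ring
        · intro r hr
          apply hcon ((r + z 0) / D 0)
          have h2 : (D 0) • z = (r + z 0) • D := by
            rw [hu'def] at hr
            linear_combination (norm := module) hr
          funext i
          have := congrFun h2 i
          simp only [Pi.smul_apply, smul_eq_mul] at this ⊢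
          field_simp
          linarith
    obtain ⟨u', hu'sp, hu'U, hu'notD⟩ := step1
    have hu'ne : u' ≠ 0 := spacelike_ne_zero hu'sp
    have hDnotu' : ∀ r : ℝ, D ≠ r • u' := by
      intro r hr
      have hrne : r ≠ 0 := by
        intro h; rw [h] at hr; simp at hr; exact hDne hr
      apply hu'notD r⁻¹
      rw [hr]
      funext i; simp only [Pi.smul_apply, smul_eq_mul]; field_simp
    by_cases hAB : ∃ ν : Fin (m+3) → ℝ, minkG ν ν = 0 ∧ ν ≠ 0 ∧ minkG ν u' = 0 ∧
        minkG w (E.symm (E a + ν) - a) ≠ 0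
    · obtain ⟨ν, hν, hνne, hνu', hνw⟩ := hAB
      have htr := hypTrans hIffs hν hνne (E a)
      have hEsa : E.symm (E a) = a := E.symm_apply_apply a
      have h1 : minkG (E a + u' - E a) ν = 0 := by
        have heq : E a + u' - E a = u' := by module
        rw [heq, g_comm u' ν]; exact hνu'
      have h2 := (htr (E a + u')).1 h1
      rw [hEsa] at h2
      obtain ⟨t₁, ht₁⟩ := hU_to_line u' hu'U
      have hsymm : E.symm (E a + u') = a + t₁ • w := by
        rw [ht₁]; simp
      rw [hsymm] at h2
      have heq2 : a + t₁ • w - a = t₁ • w := by module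
      rw [heq2, g_smul_left, g_comm w (E.symm (E a + ν) - a)] at h2
      rcases mul_eq_zero.1 h2 with h | h
      · rw [h] at ht₁
        simp at ht₁
        exact hu'ne (by linear_combination (norm := module) ht₁)
      · exact hνw (by rw [g_comm]; exact h)
    · push_neg at hAB
      have hc : ∀ ν : Fin (m+3) → ℝ, minkG ν ν = 0 → ν ≠ 0 → minkG ν u' = 0 →
          minkG D ν = 0 := by
        intro ν hν hνne hνu'
        have hB := hAB ν hν hνne hνu'
        have htr := hypTrans hIffs hν hνne (E a) (E (a + w))
        have hEsa : E.symm (E a) = a := E.symm_apply_apply a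
        have hrhs : minkG (E.symm (E (a+w)) - E.symm (E a)) (E.symm (E a + ν) - E.symm (E a)) = 0 := by
          rw [hEsa, E.symm_apply_apply]
          have heq : a + w - a = w := by module
          rw [heq]
          exact hB
        exact (htr).2 hrhs
      obtain ⟨β, hβ⟩ := spanNull hu'sp hc
      exact hDnotu' β hβ
  -- conclusions
  have hDsp : minkG D D < 0 := by
    -- not timelike
    obtain ⟨ν₀, hν₀, hν₀ne, hν₀w⟩ := exists_null_orth hw
    obtain ⟨hv'null, hv'ne, _, _⟩ := nline hIff hν₀ hν₀ne a
    have hDv' : minkG D (E (a + ν₀) - E a) = 0 := hDU ν₀ hν₀ hν₀ne hν₀w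
    have hnotpos : ¬ (0 < minkG D D) := by
      intro hpos
      have := ortho_timelike hpos hDv' hv'ne
      rw [hv'null] at this
      exact lt_irrefl 0 this
    have hnotnull : minkG D D ≠ 0 := by
      intro hnull
      have hD0ne : D 0 ≠ 0 := null_time_ne hnull hDne
      obtain ⟨z, hzne, hzD, hz0⟩ := exists_ker2 (gLin D) (LinearMap.proj 0)
      have hzD : minkG D z = 0 := hzD
      have hz0 : z 0 = 0 := hz0
      have hzU : U z := by
        intro v hv hvne hvw
        have hv'null := (nline hIff hv hvne a).1
        have hv'ne := (nline hIff hv hvne a).2.1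
        have hDv' : minkG D (E (a + v) - E a) = 0 := hDU v hv hvne hvw
        have horth : minkG (E (a+v) - E a) D = 0 := by rw [g_comm]; exact hDv'
        obtain ⟨c, hcd⟩ := null_orth hv'null hnull horth hDne
        rw [hcd, g_smul_right, g_comm z D, hzD]; ring
      obtain ⟨r, hr⟩ := claim_sub z hzU
      have := congrFun hr 0
      simp only [Pi.smul_apply, smul_eq_mul] at this
      rw [hz0] at this
      rcases mul_eq_zero.1 this.symm with h | h
      · rw [h] at hr; simp at hr; exact hzne hr
      · exact hD0ne h
    rcases lt_trichotomy (minkG D D) 0 with h | h | h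
    · exact h
    · exact absurd h hnotnull
    · exact absurd h hnotpos
  refine ⟨hDsp, ?_, ?_⟩
  · intro t
    have hU' : U (E (a + t • w) - E a) := (mem_iff _).1 ⟨t, rfl⟩
    obtain ⟨s, hs⟩ := claim_sub _ hU'
    exact ⟨s, by rw [← sub_eq_iff_eq_add']; exact hs⟩
  · intro s
    have : U (s • D) := hUsmul s D hDU
    exact hU_to_line _ this


/-- parallel spacelike lines have parallel images -/
lemma dirPar {E : (Fin (m+3) → ℝ) ≃ (Fin (m+3) → ℝ)} (hIff : PresIff E)
    {w : Fin (m+3) → ℝ} (hw : minkG w w < 0) (a b : Fin (m+3) → ℝ) :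
    ∃ c : ℝ, c ≠ 0 ∧ E (b+w) - E b = c • (E (a+w) - E a) := by
  have hIffs : PresIff E.symm := presIff_symm hIff
  obtain ⟨hDasp, hfwda, hbwda⟩ := sline hIff hw a
  obtain ⟨hDbsp, hfwdb, hbwdb⟩ := sline hIff hw b
  set Da := E (a+w) - E a with hDa
  set Db := E (b+w) - E b with hDb
  have hQ : ∀ v : Fin (m+3) → ℝ, minkG v v = 0 → v ≠ 0 → minkG v Da = 0 →
      (∃ s : ℝ, minkG (E b + s • Db - E a) v = 0) → ∀ s : ℝ, minkG (E b + s • Db - E a) v = 0 := by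
    intro v hv hvne hvDa hex
    have htr := hypTrans hIffs hv hvne (E a)
    have hEsa : E.symm (E a) = a := E.symm_apply_apply a
    set νt := E.symm (E a + v) - a with hνt
    have htr' : ∀ y, minkG (y - E a) v = 0 ↔ minkG (E.symm y - a) νt = 0 := by
      intro y
      have := htr y
      rwa [hEsa] at this
    have hwνt : minkG w νt = 0 := by
      have h1 : minkG (E (a+w) - E a) v = 0 := by rw [g_comm]; exact hvDa
      have h2 := (htr' (E (a+w))).1 h1
      rw [E.symm_apply_apply] at h2
      have heq : a + w - a = w := by module
      rwa [heq] at h2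
    have hba : minkG (b - a) νt = 0 := by
      obtain ⟨s₀, h₀⟩ := hex
      obtain ⟨t₀, ht₀⟩ := hbwdb s₀
      rw [show E b + s₀ • Db = E (b + t₀ • w) from ht₀] at h₀
      have h2 := (htr' (E (b + t₀ • w))).1 h₀
      rw [E.symm_apply_apply] at h2
      have heq : b + t₀ • w - a = (b - a) + t₀ • w := by module
      rw [heq, g_add_left, g_smul_left, hwνt] at h2
      linarith
    intro s
    obtain ⟨t₁, ht₁⟩ := hbwdb s
    rw [show E b + s • Db = E (b + t₁ • w) from ht₁]
    apply (htr' (E (b + t₁ • w))).2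
    rw [E.symm_apply_apply]
    have heq : b + t₁ • w - a = (b - a) + t₁ • w := by module
    rw [heq, g_add_left, g_smul_left, hwνt, hba]; ring
  obtain ⟨c, hc⟩ := parDir hDasp hQ
  refine ⟨c, ?_, hc⟩
  intro h
  rw [h] at hc
  simp at hc
  exact (spacelike_ne_zero hDbsp) hc

/-- basepoint-0 version of `sline` when `E 0 = 0` -/
lemma sline0 {E : (Fin (m+3) → ℝ) ≃ (Fin (m+3) → ℝ)} (hIff : PresIff E) (hE0 : E 0 = 0)
    {u : Fin (m+3) → ℝ} (hu : minkG u u < 0) :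
    minkG (E u) (E u) < 0 ∧ (∀ t : ℝ, ∃ s : ℝ, E (t • u) = s • E u) ∧
    (∀ s : ℝ, ∃ t : ℝ, s • E u = E (t • u)) := by
  have h := sline hIff hu 0
  simp only [zero_add, hE0, sub_zero] at h
  exact h

/-- image vectors of independent spacelike directions are not proportional -/
lemma img_indep {E : (Fin (m+3) → ℝ) ≃ (Fin (m+3) → ℝ)} (hIff : PresIff E) (hE0 : E 0 = 0)
    {u v : Fin (m+3) → ℝ} (hu : minkG u u < 0) (hvu : ∀ c : ℝ, v ≠ c • u) :
    ∀ κ : ℝ, E v ≠ κ • E u := by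
  intro κ hcon
  obtain ⟨_, _, hbwd⟩ := sline0 hIff hE0 hu
  obtain ⟨t, ht⟩ := hbwd κ
  rw [← hcon] at ht
  exact hvu t (E.injective ht)

/-- additivity on independent spacelike pairs -/
lemma addSp {E : (Fin (m+3) → ℝ) ≃ (Fin (m+3) → ℝ)} (hIff : PresIff E) (hE0 : E 0 = 0)
    {u v : Fin (m+3) → ℝ} (hu : minkG u u < 0) (hv : minkG v v < 0)
    (huv : ∀ c : ℝ, u ≠ c • v) (hvu : ∀ c : ℝ, v ≠ c • u) :
    E (u + v) = E u + E v := by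
  obtain ⟨c₁, hc₁ne, hc₁⟩ := dirPar hIff hu 0 v
  obtain ⟨c₂, hc₂ne, hc₂⟩ := dirPar hIff hv 0 u
  rw [zero_add, hE0, sub_zero] at hc₁ hc₂
  have h1 : E (u + v) = E v + c₁ • E u := by
    rw [show u + v = v + u by module]
    linear_combination (norm := module) hc₁
  have h2 : E (u + v) = E u + c₂ • E v := by
    linear_combination (norm := module) hc₂
  have heq : (c₁ - 1) • E u = (c₂ - 1) • E v := by
    have h3 : E v + c₁ • E u = E u + c₂ • E v := by rw [← h1, h2]
    linear_combination (norm := module) h3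
  have hc₁1 : c₁ = 1 := by
    by_contra hne
    have hc : c₁ - 1 ≠ 0 := sub_ne_zero.2 hne
    have hEu : E u = ((c₂ - 1)/(c₁ - 1)) • E v := by
      funext i
      have := congrFun heq i
      simp only [Pi.smul_apply, smul_eq_mul] at this ⊢
      field_simp
      linarith
    exact img_indep hIff hE0 hv huv _ hEu
  rw [hc₁1, one_smul] at h1
  rw [h1]; module


lemma g_neg_neg (x : Fin (m+3) → ℝ) : minkG (-x) (-x) = minkG x x := by
  rw [g_neg_left, g_comm, g_neg_left, g_comm]; ring

lemma sp_smul {u : Fin (m+3) → ℝ} (hu : minkG u u < 0) {c : ℝ} (hc : c ≠ 0) :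
    minkG (c • u) (c • u) < 0 := by
  rw [g_smul_left, g_smul_right]
  nlinarith [sq_pos_of_ne_zero hc]

lemma smul_cancel {x : Fin (m+3) → ℝ} (hx : x ≠ 0) {c c' : ℝ} (h : c • x = c' • x) :
    c = c' := by
  obtain ⟨i, hi⟩ := Function.ne_iff.1 hx
  have := congrFun h i
  simp only [Pi.smul_apply, smul_eq_mul] at this
  have hxi : x i ≠ 0 := hi
  exact mul_right_cancel₀ hxi this

/-- scalars agree between two independent spacelike directions if their
difference is spacelike -/
lemma claimB {E : (Fin (m+3) → ℝ) ≃ (Fin (m+3) → ℝ)} (hIff : PresIff E) (hE0 : E 0 = 0)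
    {u v : Fin (m+3) → ℝ} (hu : minkG u u < 0) (hv : minkG v v < 0)
    (hvu : ∀ c : ℝ, v ≠ c • u) (hd : minkG (u - v) (u - v) < 0)
    {s c c' : ℝ} (h1 : E (s • u) = c • E u) (h2 : E (s • v) = c' • E v) : c' = c := by
  have huv : ∀ κ : ℝ, u ≠ κ • v := by
    intro κ hκ
    have hκne : κ ≠ 0 := by
      intro h0; rw [h0] at hκ; simp at hκ; exact (spacelike_ne_zero hu) hκ
    exact hvu κ⁻¹ (by rw [hκ]; funext i; simp only [Pi.smul_apply, smul_eq_mul]; field_simp)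
  set d := u - v with hddef
  -- line through u with direction d contains v at t = -1
  obtain ⟨hWsp, hfwd, _⟩ := sline hIff hd u
  set W := E (u + d) - E u with hW
  obtain ⟨r₁, hr₁⟩ := hfwd (-1)
  have hvpt : u + (-1 : ℝ) • d = v := by rw [hddef]; module
  rw [hvpt] at hr₁
  -- r₁ ≠ 0
  have hr₁ne : r₁ ≠ 0 := by
    intro h0
    rw [h0] at hr₁; simp at hr₁
    exact huv 1 (by rw [one_smul]; exact hr₁.symm)
  -- line through s•u with direction d contains s•v at t = -s
  obtain ⟨_, hfwd₂, _⟩ := sline hIff hd (s • u)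
  obtain ⟨c₃, hc₃ne, hc₃⟩ := dirPar hIff hd u (s • u)
  obtain ⟨r₂, hr₂⟩ := hfwd₂ (-s)
  have hvpt₂ : s • u + (-s : ℝ) • d = s • v := by rw [hddef]; module
  rw [hvpt₂] at hr₂
  rw [hc₃, ← hW] at hr₂
  -- substitute
  rw [h1, h2] at hr₂
  -- hr₂ : c' • E v = c • E u + r₂ • (c₃ • W)
  -- hr₁ : E v = E u + r₁ • W
  have hWval : r₁ • W = E v - E u := by linear_combination (norm := module) (-1 : ℝ) • hr₁
  have hkey : (r₁ * c') • E v = (r₁ * c - r₂ * c₃) • E u + (r₂ * c₃) • E v := by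
    have e1 : (r₁ * c') • E v = r₁ • (c' • E v) := by module
    rw [e1, hr₂]
    have e2 : r₁ • (c • E u + r₂ • c₃ • W) = (r₁ * c) • E u + (r₂ * c₃) • (r₁ • W) := by
      module
    rw [e2, hWval]
    module
  -- (r₁ c' - r₂ c₃) • E v = (r₁ c - r₂ c₃) • E u
  have hkey2 : (r₁ * c' - r₂ * c₃) • E v = (r₁ * c - r₂ * c₃) • E u := by
    linear_combination (norm := module) hkey
  have hcoeff : r₁ * c - r₂ * c₃ = 0 := by
    by_contra hne
    have hEu : E u = ((r₁ * c' - r₂ * c₃)/(r₁ * c - r₂ * c₃)) • E v := by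
      funext i
      have := congrFun hkey2 i
      simp only [Pi.smul_apply, smul_eq_mul] at this ⊢
      field_simp
      linarith
    exact img_indep hIff hE0 hv huv _ hEu
  have hcoeff2 : r₁ * c' - r₂ * c₃ = 0 := by
    by_contra hne
    have hEv : E v = 0 := by
      rw [hcoeff] at hkey2
      simp only [zero_smul] at hkey2
      rcases smul_eq_zero.1 hkey2 with h | h
      · exact absurd h hne
      · exact h
    have := (sline0 hIff hE0 hv).1
    rw [hEv, g_zero_left] at this
    exact lt_irrefl 0 this
  have : r₁ * c' = r₁ * c := by linarith
  exact mul_left_cancel₀ hr₁ne this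


lemma delta_choice {u₁ u : Fin (m+3) → ℝ} (h11 : minkG u₁ u₁ = -1) (hu : minkG u u < 0) :
    ∃ δ : ℝ, (δ = 1 ∨ δ = -1) ∧ minkG (δ • u₁ - u) (δ • u₁ - u) < 0 := by
  by_cases hsgn : 0 ≤ minkG u₁ u
  · refine ⟨1, Or.inl rfl, ?_⟩
    simp only [g_sub_left, g_sub_right, g_smul_left, g_smul_right, h11]
    rw [g_comm u u₁]
    linarith
  · refine ⟨-1, Or.inr rfl, ?_⟩
    simp only [g_sub_left, g_sub_right, g_smul_left, g_smul_right, h11]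
    rw [g_comm u u₁]
    push_neg at hsgn
    linarith

/-- scalar homogeneity on spacelike vectors -/
lemma homSp {E : (Fin (m+3) → ℝ) ≃ (Fin (m+3) → ℝ)} (hIff : PresIff E) (hE0 : E 0 = 0) :
    ∀ u : Fin (m+3) → ℝ, minkG u u < 0 → ∀ s : ℝ, E (s • u) = s • E u := by
  set i1 : Fin (m+3) := ⟨1, by omega⟩ with hi1
  set i2 : Fin (m+3) := ⟨2, by omega⟩ with hi2
  set u₁ : Fin (m+3) → ℝ := Pi.single i1 1 with hu₁def
  set u₂ : Fin (m+3) → ℝ := Pi.single i2 1 with hu₂def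
  have h0i1 : (0 : Fin (m+3)) ≠ i1 := by simp [hi1, Fin.ext_iff]
  have h0i2 : (0 : Fin (m+3)) ≠ i2 := by simp [hi2, Fin.ext_iff]
  have hi1i2 : i1 ≠ i2 := by simp [hi1, hi2, Fin.ext_iff]
  have h10 : u₁ 0 = 0 := Pi.single_eq_of_ne h0i1 1
  have h11 : u₁ i1 = 1 := Pi.single_eq_same i1 1
  have h12 : u₁ i2 = 0 := Pi.single_eq_of_ne hi1i2.symm 1
  have h20 : u₂ 0 = 0 := Pi.single_eq_of_ne h0i2 1
  have h21 : u₂ i1 = 0 := Pi.single_eq_of_ne hi1i2 1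
  have h22 : u₂ i2 = 1 := Pi.single_eq_same i2 1
  have hu₁ne : u₁ ≠ 0 := by
    intro h; have := congrFun h i1; rw [h11] at this; simpa using this
  have hu₂ne : u₂ ≠ 0 := by
    intro h; have := congrFun h i2; rw [h22] at this; simpa using this
  have hsp1 : minkG u₁ u₁ < 0 := time0_spacelike h10 hu₁ne
  have hsp2 : minkG u₂ u₂ < 0 := time0_spacelike h20 hu₂ne
  have g11 : minkG u₁ u₁ = -1 := by
    rw [hu₁def, g_single_left]
    have : ((i1 : Fin (m+3)) : ℕ) = 1 := rfl
    rw [this]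
    simp [h11]
  -- spacelike combos of the form r • u₁ + u₂
  have hspc : ∀ r : ℝ, minkG (r • u₁ + u₂) (r • u₁ + u₂) < 0 := by
    intro r
    apply time0_spacelike
    · simp [h10, h20]
    · intro h
      have := congrFun h i2
      simp [h12, h22] at this
  -- independence facts
  have hvu21 : ∀ c : ℝ, u₂ ≠ c • u₁ := by
    intro c h
    have := congrFun h i2
    rw [h22] at this
    simp [h12] at this
  have hd12 : minkG (u₁ - u₂) (u₁ - u₂) < 0 := by
    apply time0_spacelike
    · simp [h10, h20]
    · intro h
      have := congrFun h i1
      simp [h11, h21] at this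
  -- the scalar map
  choose σ hσ using (sline0 hIff hE0 hsp1).2.1
  have hEu₁ne : E u₁ ≠ 0 := spacelike_ne_zero (sline0 hIff hE0 hsp1).1
  have hσ0 : σ 0 = 0 := by
    have h := hσ 0
    rw [zero_smul, hE0] at h
    exact (smul_cancel hEu₁ne (show σ 0 • E u₁ = 0 • E u₁ by rw [zero_smul, ← h])).symm ▸ rfl
  have hσ1 : σ 1 = 1 := by
    have h := hσ 1
    rw [one_smul] at h
    exact (smul_cancel hEu₁ne (show σ 1 • E u₁ = 1 • E u₁ by rw [one_smul, ← h]))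
  -- transfer: any scalar for any spacelike direction equals σ
  have htr : ∀ u : Fin (m+3) → ℝ, minkG u u < 0 → ∀ s c : ℝ, E (s • u) = c • E u → c = σ s := by
    intro u hu s c hval
    obtain ⟨c₂, hc₂⟩ := (sline0 hIff hE0 hsp2).2.1 s
    have hc₂σ : c₂ = σ s := claimB hIff hE0 hsp1 hsp2 hvu21 hd12 (hσ s) hc₂
    by_cases hcase1 : ∃ t : ℝ, u = t • u₁
    · obtain ⟨t, rfl⟩ := hcase1
      have htne : t ≠ 0 := by
        intro h; rw [h, zero_smul, g_zero_left] at hu; exact lt_irrefl 0 hu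
      have hind : ∀ κ : ℝ, t • u₁ ≠ κ • u₂ := by
        intro κ h
        have := congrFun h i1
        simp only [Pi.smul_apply, smul_eq_mul] at this
        rw [h11, h21] at this
        simp [htne] at this
      have hdt : minkG (u₂ - t • u₁) (u₂ - t • u₁) < 0 := by
        apply time0_spacelike
        · simp [h10, h20]
        · intro h
          have := congrFun h i2
          simp only [Pi.sub_apply, Pi.smul_apply, smul_eq_mul] at this
          rw [h22, h12] at this
          simp at this
      exact (claimB hIff hE0 hsp2 hu hind hdt hc₂ hval).trans hc₂σ
    · -- u ∉ ℝ u₁ : go through δ • u₁ with δ = ±1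
      push_neg at hcase1
      obtain ⟨δ, hδpm, hδsp⟩ := delta_choice g11 hu
      have hδne : δ ≠ 0 := by rcases hδpm with h | h <;> rw [h] <;> norm_num
      have hspδ : minkG (δ • u₁) (δ • u₁) < 0 := sp_smul hsp1 hδne
      have hindδ2 : ∀ κ : ℝ, δ • u₁ ≠ κ • u₂ := by
        intro κ h
        have := congrFun h i1
        simp only [Pi.smul_apply, smul_eq_mul] at this
        rw [h11, h21] at this
        simp [hδne] at this
      have hdδ2 : minkG (u₂ - δ • u₁) (u₂ - δ • u₁) < 0 := by
        apply time0_spacelike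
        · simp [h10, h20]
        · intro h
          have := congrFun h i2
          simp only [Pi.sub_apply, Pi.smul_apply, smul_eq_mul] at this
          rw [h22, h12] at this
          simp at this
      obtain ⟨cδ, hcδ⟩ := (sline0 hIff hE0 hspδ).2.1 s
      have hcδσ : cδ = σ s := (claimB hIff hE0 hsp2 hspδ hindδ2 hdδ2 hc₂ hcδ).trans hc₂σ
      have hindu : ∀ κ : ℝ, u ≠ κ • (δ • u₁) := by
        intro κ h
        exact hcase1 (κ * δ) (by rw [h, smul_smul])
      exact (claimB hIff hE0 hspδ hu hindu hδsp hcδ hval).trans hcδσ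
  -- value on r • u₁ + u₂
  have hval2 : ∀ r : ℝ, E (r • u₁ + u₂) = σ r • E u₁ + E u₂ := by
    intro r
    by_cases hr : r = 0
    · rw [hr, hσ0, zero_smul, zero_smul, zero_add, zero_add]
    · have hsp_r : minkG (r • u₁) (r • u₁) < 0 := sp_smul hsp1 hr
      have hind1 : ∀ κ : ℝ, r • u₁ ≠ κ • u₂ := by
        intro κ h
        have := congrFun h i1
        simp only [Pi.smul_apply, smul_eq_mul] at this
        rw [h11, h21] at this
        simp [hr] at this
      have hind2 : ∀ κ : ℝ, u₂ ≠ κ • (r • u₁) := by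
        intro κ h
        have := congrFun h i2
        simp only [Pi.smul_apply, smul_eq_mul] at this
        rw [h22, h12] at this
        simp at this
      rw [addSp hIff hE0 hsp_r hsp2 hind1 hind2, hσ r]
  -- additivity of σ
  have hadd : ∀ s s' : ℝ, σ (s + s') = σ s + σ s' := by
    intro s s'
    by_cases hs : s = 0
    · rw [hs, hσ0, zero_add, zero_add]
    · have hind1 : ∀ κ : ℝ, s • u₁ ≠ κ • (s' • u₁ + u₂) := by
        intro κ h
        have h2 := congrFun h i2
        simp only [Pi.smul_apply, Pi.add_apply, smul_eq_mul, h12, h22] at h2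
        have hκ0 : κ = 0 := by linear_combination (-1 : ℝ) * h2
        rw [hκ0, zero_smul] at h
        have h1 := congrFun h i1
        simp only [Pi.smul_apply, smul_eq_mul, h11] at h1
        simp at h1
        exact hs h1
      have hind2 : ∀ κ : ℝ, (s' • u₁ + u₂) ≠ κ • (s • u₁) := by
        intro κ h
        have h2 := congrFun h i2
        simp only [Pi.add_apply, Pi.smul_apply, smul_eq_mul, h12, h22] at h2
        linarith [h2]
      have e1 : s • u₁ + (s' • u₁ + u₂) = (s + s') • u₁ + u₂ := by module
      have hkey : σ s • E u₁ + (σ s' • E u₁ + E u₂) = σ (s+s') • E u₁ + E u₂ := by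
        rw [← hval2 (s+s'), ← e1,
          addSp hIff hE0 (sp_smul hsp1 hs) (hspc s') hind1 hind2, hσ s, hval2 s']
      have hfin : (σ s + σ s') • E u₁ = σ (s+s') • E u₁ := by
        linear_combination (norm := module) hkey
      exact (smul_cancel hEu₁ne hfin).symm
  -- multiplicativity of σ
  have hmul : ∀ s t : ℝ, σ (s * t) = σ s * σ t := by
    intro s t
    by_cases ht : t = 0
    · rw [ht, mul_zero, hσ0, mul_zero]
    · have hspt : minkG (t • u₁) (t • u₁) < 0 := sp_smul hsp1 ht
      obtain ⟨c, hc⟩ := (sline0 hIff hE0 hspt).2.1 s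
      have hcσ : c = σ s := htr _ hspt s c hc
      have heq : E ((s*t) • u₁) = (σ s * σ t) • E u₁ := by
        rw [show (s*t) • u₁ = s • (t • u₁) by rw [smul_smul], hc, hcσ, hσ t]
        module
      rw [hσ (s*t)] at heq
      exact smul_cancel hEu₁ne heq
  -- σ is a ring hom, hence the identity
  have hid : ∀ r : ℝ, σ r = r := by
    have hhom : (⟨⟨⟨σ, hσ1⟩, fun x y => hmul x y⟩, hσ0, fun x y => hadd x y⟩ : ℝ →+* ℝ)
        = RingHom.id ℝ := Subsingleton.elim _ _
    intro r
    exact RingHom.congr_fun hhom r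
  intro u hu s
  obtain ⟨c, hc⟩ := (sline0 hIff hE0 hu).2.1 s
  rw [hc, htr u hu s c hc, hid]


/-- a spacelike vector outside the span of two given vectors -/
lemma exists_sp_out (u v : Fin (m+3) → ℝ) :
    ∃ s : Fin (m+3) → ℝ, minkG s s < 0 ∧ ∀ α β : ℝ, s ≠ α • u + β • v := by
  set i1 : Fin (m+3) := ⟨1, by omega⟩ with hi1
  set i2 : Fin (m+3) := ⟨2, by omega⟩ with hi2
  have h0i1 : (0 : Fin (m+3)) ≠ i1 := by simp [hi1, Fin.ext_iff]
  have h0i2 : (0 : Fin (m+3)) ≠ i2 := by simp [hi2, Fin.ext_iff]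
  have hi1i2 : i1 ≠ i2 := by simp [hi1, hi2, Fin.ext_iff]
  set w1 : Fin (m+3) → ℝ := Pi.single i1 1 with hw1
  set w2 : Fin (m+3) → ℝ := Pi.single i2 1 with hw2
  set w3 : Fin (m+3) → ℝ := (Pi.single 0 1 : Fin (m+3) → ℝ) + (2:ℝ) • (Pi.single i1 1 : Fin (m+3) → ℝ) with hw3
  have hsp1 : minkG w1 w1 < 0 := by
    apply time0_spacelike (Pi.single_eq_of_ne h0i1 1)
    intro h; have := congrFun h i1; rw [Pi.single_eq_same] at this; simpa using this
  have hsp2 : minkG w2 w2 < 0 := by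
    apply time0_spacelike (Pi.single_eq_of_ne h0i2 1)
    intro h; have := congrFun h i2; rw [Pi.single_eq_same] at this; simpa using this
  have hsp3 : minkG w3 w3 < 0 := by
    have h00 : minkG (Pi.single (0:Fin (m+3)) (1:ℝ)) (Pi.single (0:Fin (m+3)) (1:ℝ)) = 1 := by
      rw [g_single_left]; simp
    have h0i : minkG (Pi.single (0:Fin (m+3)) (1:ℝ)) (Pi.single i1 (1:ℝ)) = 0 := by
      rw [g_single_left]; simp [Pi.single_eq_of_ne h0i1]
    have hi0 : minkG (Pi.single i1 (1:ℝ)) (Pi.single (0:Fin (m+3)) (1:ℝ)) = 0 := by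
      rw [g_comm]; exact h0i
    have hii : minkG (Pi.single i1 (1:ℝ)) (Pi.single i1 (1:ℝ)) = -1 := by
      rw [g_single_left]
      have : ((i1 : Fin (m+3)) : ℕ) = 1 := rfl
      rw [this]; simp
    rw [hw3]
    simp only [g_add_left, g_add_right, g_smul_left, g_smul_right, h00, h0i, hi0, hii]
    norm_num
  by_cases hc1 : ∀ α β : ℝ, w1 ≠ α • u + β • v
  · exact ⟨w1, hsp1, hc1⟩
  by_cases hc2 : ∀ α β : ℝ, w2 ≠ α • u + β • v
  · exact ⟨w2, hsp2, hc2⟩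
  by_cases hc3 : ∀ α β : ℝ, w3 ≠ α • u + β • v
  · exact ⟨w3, hsp3, hc3⟩
  exfalso
  push_neg at hc1 hc2 hc3
  obtain ⟨α₁, β₁, he1⟩ := hc1
  obtain ⟨α₂, β₂, he2⟩ := hc2
  obtain ⟨α₃, β₃, he3⟩ := hc3
  -- coefficients of e0 : e0 = w3 - 2 w1
  set γ := α₃ - 2*α₁ with hγ
  set δ := β₃ - 2*β₁ with hδ
  have he0 : (Pi.single 0 1 : Fin (m+3) → ℝ) = γ • u + δ • v := by
    have : (Pi.single 0 1 : Fin (m+3) → ℝ) = w3 - (2:ℝ) • w1 := by rw [hw3, hw1]; module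
    rw [this, he3, he1, hγ, hδ]; module
  -- evaluate at coordinates
  have c0w1 : w1 0 = 0 := Pi.single_eq_of_ne h0i1 1
  have c0w2 : w2 0 = 0 := Pi.single_eq_of_ne h0i2 1
  have c0e0 : (Pi.single 0 1 : Fin (m+3) → ℝ) 0 = 1 := Pi.single_eq_same 0 1
  have ci1w1 : w1 i1 = 1 := Pi.single_eq_same i1 1
  have ci1w2 : w2 i1 = 0 := Pi.single_eq_of_ne hi1i2 1
  have ci2w1 : w1 i2 = 0 := Pi.single_eq_of_ne hi1i2.symm 1
  have ci2w2 : w2 i2 = 1 := Pi.single_eq_same i2 1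
  have eq10 : α₁ * u 0 + β₁ * v 0 = 0 := by
    have := congrFun he1 0
    simp only [Pi.add_apply, Pi.smul_apply, smul_eq_mul] at this
    rw [c0w1] at this; linarith
  have eq11 : α₁ * u i1 + β₁ * v i1 = 1 := by
    have := congrFun he1 i1
    simp only [Pi.add_apply, Pi.smul_apply, smul_eq_mul] at this
    rw [ci1w1] at this; linarith
  have eq20 : α₂ * u 0 + β₂ * v 0 = 0 := by
    have := congrFun he2 0
    simp only [Pi.add_apply, Pi.smul_apply, smul_eq_mul] at this
    rw [c0w2] at this; linarith
  have eq21 : α₂ * u i1 + β₂ * v i1 = 0 := by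
    have := congrFun he2 i1
    simp only [Pi.add_apply, Pi.smul_apply, smul_eq_mul] at this
    rw [ci1w2] at this; linarith
  have eq22 : α₂ * u i2 + β₂ * v i2 = 1 := by
    have := congrFun he2 i2
    simp only [Pi.add_apply, Pi.smul_apply, smul_eq_mul] at this
    rw [ci2w2] at this; linarith
  have eq30 : γ * u 0 + δ * v 0 = 1 := by
    have := congrFun he0 0
    simp only [Pi.add_apply, Pi.smul_apply, smul_eq_mul] at this
    rw [c0e0] at this; linarith
  -- determinant vanishes
  have d0 : α₁*β₂ - α₂*β₁ = 0 := by
    linear_combination (-(α₁*β₂ - α₂*β₁)) * eq30 + (γ*β₂ - δ*α₂) * eq10 + (-(γ*β₁ - δ*α₁)) * eq20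
  have hα2 : α₂ = 0 := by
    linear_combination (-(v i1)) * d0 + α₁ * eq21 + (-α₂) * eq11
  have hβ2 : β₂ = 0 := by
    linear_combination (u i1) * d0 + β₁ * eq21 + (-β₂) * eq11
  rw [hα2, hβ2] at eq22
  simp at eq22

/-- all sufficiently large shifts along a spacelike direction are spacelike -/
lemma spacelike_combo' (x : Fin (m+3) → ℝ) {s : Fin (m+3) → ℝ} (hs : minkG s s < 0) :
    ∃ T₀ : ℝ, 0 < T₀ ∧ ∀ T : ℝ, T₀ ≤ T →
      minkG (x + T • s) (x + T • s) < 0 ∧ minkG (x - T • s) (x - T • s) < 0 := by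
  set Q := |minkG x x| + 2*|minkG x s| + 1 with hQdef
  have hgs : 0 < -minkG s s := by linarith
  have hQ : 0 < Q := by positivity
  set T₀ := Q / (-minkG s s) + 1 with hTdef
  have hdiv : 0 ≤ Q / (-minkG s s) := le_of_lt (div_pos hQ hgs)
  have hT₀1 : 1 ≤ T₀ := by rw [hTdef]; linarith
  refine ⟨T₀, by linarith, fun T hT => ?_⟩
  have hT1 : 1 ≤ T := le_trans hT₀1 hT
  have hT0 : 0 < T := by linarith
  have hTQ : Q ≤ T * (-minkG s s) := by
    have hdm : (Q / -minkG s s) * (-minkG s s) = Q := div_mul_cancel₀ Q (ne_of_gt hgs)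
    have h1 : T₀ * (-minkG s s) ≤ T * (-minkG s s) :=
      mul_le_mul_of_nonneg_right hT (le_of_lt hgs)
    rw [hTdef, add_mul, hdm, one_mul] at h1
    linarith
  have habs1 := le_abs_self (minkG x x)
  have habs2 := le_abs_self (minkG x s)
  have habs3 := neg_abs_le (minkG x s)
  constructor
  · simp only [g_add_left, g_add_right, g_smul_left, g_smul_right]
    rw [g_comm s x]
    nlinarith [mul_le_mul_of_nonneg_left hTQ (le_of_lt hT0), mul_le_mul_of_nonneg_left habs2 (le_of_lt hT0), mul_le_mul_of_nonneg_left habs3 (le_of_lt hT0), mul_nonneg (sub_nonneg.2 hT1) (abs_nonneg (minkG x x))]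
  · simp only [g_sub_left, g_sub_right, g_smul_left, g_smul_right]
    rw [g_comm s x]
    nlinarith [mul_le_mul_of_nonneg_left hTQ (le_of_lt hT0), mul_le_mul_of_nonneg_left habs2 (le_of_lt hT0), mul_le_mul_of_nonneg_left habs3 (le_of_lt hT0), mul_nonneg (sub_nonneg.2 hT1) (abs_nonneg (minkG x x))]


/-- additivity when the first summand is spacelike -/
lemma addGen {E : (Fin (m+3) → ℝ) ≃ (Fin (m+3) → ℝ)} (hIff : PresIff E) (hE0 : E 0 = 0)
    {u : Fin (m+3) → ℝ} (hu : minkG u u < 0) (v : Fin (m+3) → ℝ) :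
    E (u + v) = E u + E v := by
  by_cases hv0 : v = 0
  · rw [hv0, add_zero, hE0, add_zero]
  by_cases hvlin : ∃ c : ℝ, v = c • u
  · obtain ⟨c, rfl⟩ := hvlin
    rw [show u + c • u = (1+c) • u by module, homSp hIff hE0 u hu (1+c),
      homSp hIff hE0 u hu c]
    module
  push_neg at hvlin
  obtain ⟨sv, hsvsp, hsout⟩ := exists_sp_out u v
  obtain ⟨T₁, hT₁0, hT₁⟩ := spacelike_combo' u hsvsp
  obtain ⟨T₂, hT₂0, hT₂⟩ := spacelike_combo' v hsvsp
  set T := max T₁ T₂ with hT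
  have hT0 : 0 < T := lt_of_lt_of_le hT₁0 (le_max_left _ _)
  have hTne : T ≠ 0 := ne_of_gt hT0
  have hsp_uT : minkG (u + T • sv) (u + T • sv) < 0 := (hT₁ T (le_max_left _ _)).1
  have hsp_vT : minkG (v - T • sv) (v - T • sv) < 0 := (hT₂ T (le_max_right _ _)).2
  have hsp_T : minkG (T • sv) (T • sv) < 0 := sp_smul hsvsp hTne
  have hune : u ≠ 0 := spacelike_ne_zero hu
  -- independence facts
  have hind_uT1 : ∀ c : ℝ, u ≠ c • (T • sv) := by
    intro c h
    by_cases hc : c * T = 0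
    · rw [smul_smul, hc, zero_smul] at h
      exact hune h
    · apply hsout (c*T)⁻¹ 0
      rw [smul_smul] at h
      rw [zero_smul, add_zero, h, smul_smul]
      rw [inv_mul_cancel₀ hc, one_smul]
  have hind_uT2 : ∀ c : ℝ, T • sv ≠ c • u := by
    intro c h
    apply hsout (c / T) 0
    have h2 : T⁻¹ • (T • sv) = T⁻¹ • (c • u) := by rw [h]
    rw [smul_smul, inv_mul_cancel₀ hTne, one_smul] at h2
    rw [h2]
    match_scalars <;> field_simp
  have hpair : ∀ c : ℝ, v - T • sv ≠ c • (u + T • sv) := by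
    intro c h
    by_cases hc : c = -1
    · rw [hc] at h
      apply hvlin (-1)
      have : v = -u := by linear_combination (norm := module) h
      rw [this]; module
    · have hcT : (1 + c) * T ≠ 0 := by
        intro h0
        rcases mul_eq_zero.1 h0 with h' | h'
        · exact hc (by linarith)
        · exact hTne h'
      apply hsout (-(c / ((1+c)*T))) (1 / ((1+c)*T))
      have hveq : v - c • u = ((1+c) * T) • sv := by
        linear_combination (norm := module) h
      have h2 : ((1+c)*T)⁻¹ • (v - c • u) = ((1+c)*T)⁻¹ • (((1+c) * T) • sv) := by
        rw [hveq]
      rw [smul_smul, inv_mul_cancel₀ hcT, one_smul] at h2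
      rw [← h2]
      match_scalars <;> field_simp <;> ring
  have hind_p2a : ∀ c : ℝ, v - T • sv ≠ c • (u + T • sv) := hpair
  have hind_p2b : ∀ c : ℝ, u + T • sv ≠ c • (v - T • sv) := by
    intro c h
    by_cases hc : c = 0
    · rw [hc, zero_smul] at h
      exact (spacelike_ne_zero hsp_uT) h
    · apply hpair c⁻¹
      rw [h, smul_smul, inv_mul_cancel₀ hc, one_smul]
  have hind_p3a : ∀ c : ℝ, v - T • sv ≠ c • (T • sv) := by
    intro c h
    have hveq : v = ((c + 1) * T) • sv := by
      rw [smul_smul] at h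
      linear_combination (norm := module) h
    by_cases hcT : (c+1) * T = 0
    · rw [hcT, zero_smul] at hveq
      exact hv0 hveq
    · apply hsout 0 ((c+1)*T)⁻¹
      rw [zero_smul, zero_add, hveq, smul_smul, inv_mul_cancel₀ hcT, one_smul]
      
  have hind_p3b : ∀ c : ℝ, T • sv ≠ c • (v - T • sv) := by
    intro c h
    by_cases hc : c = 0
    · rw [hc, zero_smul] at h
      exact (spacelike_ne_zero hsp_T) h
    · have h2 := congrArg (fun z => c⁻¹ • z) h
      try simp only [] at h2
      rw [smul_smul c⁻¹ c, inv_mul_cancel₀ hc, one_smul] at h2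
      exact hind_p3a c⁻¹ h2.symm
  -- the three additivity instances
  have h1 : E (u + T • sv) = E u + E (T • sv) :=
    addSp hIff hE0 hu hsp_T hind_uT1 hind_uT2
  have h2 : E ((u + T • sv) + (v - T • sv)) = E (u + T • sv) + E (v - T • sv) :=
    addSp hIff hE0 hsp_uT hsp_vT hind_p2b hind_p2a
  have h3 : E (T • sv + (v - T • sv)) = E (T • sv) + E (v - T • sv) :=
    addSp hIff hE0 hsp_T hsp_vT hind_p3b hind_p3a
  rw [show (u + T • sv) + (v - T • sv) = u + v by module] at h2
  rw [show T • sv + (v - T • sv) = v by module] at h3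
  rw [h2, h1, h3]
  module

/-- full additivity -/
lemma addAll {E : (Fin (m+3) → ℝ) ≃ (Fin (m+3) → ℝ)} (hIff : PresIff E) (hE0 : E 0 = 0)
    (x y : Fin (m+3) → ℝ) : E (x + y) = E x + E y := by
  set i1 : Fin (m+3) := ⟨1, by omega⟩ with hi1
  have h0i1 : (0 : Fin (m+3)) ≠ i1 := by simp [hi1, Fin.ext_iff]
  set w : Fin (m+3) → ℝ := Pi.single i1 1 with hw
  have hwsp : minkG w w < 0 := by
    apply time0_spacelike (Pi.single_eq_of_ne h0i1 1)
    intro h; have := congrFun h i1; rw [Pi.single_eq_same] at this; simpa using this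
  obtain ⟨T₀, hT₀0, hT₀⟩ := spacelike_combo' x hwsp
  have hsp_T : minkG (T₀ • w) (T₀ • w) < 0 := sp_smul hwsp (ne_of_gt hT₀0)
  have hsp_x : minkG (x - T₀ • w) (x - T₀ • w) < 0 := (hT₀ T₀ le_rfl).2
  have e1 : E (x + y) = E (T₀ • w) + E ((x - T₀ • w) + y) := by
    rw [show x + y = T₀ • w + ((x - T₀ • w) + y) by module]
    exact addGen hIff hE0 hsp_T _
  rw [e1, addGen hIff hE0 hsp_x y,
    show E x = E (T₀ • w + (x - T₀ • w)) by rw [show T₀ • w + (x - T₀ • w) = x by module],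
    addGen hIff hE0 hsp_T (x - T₀ • w)]
  module

/-- full homogeneity -/
lemma homAll {E : (Fin (m+3) → ℝ) ≃ (Fin (m+3) → ℝ)} (hIff : PresIff E) (hE0 : E 0 = 0)
    (c : ℝ) (x : Fin (m+3) → ℝ) : E (c • x) = c • E x := by
  set i1 : Fin (m+3) := ⟨1, by omega⟩ with hi1
  have h0i1 : (0 : Fin (m+3)) ≠ i1 := by simp [hi1, Fin.ext_iff]
  set w : Fin (m+3) → ℝ := Pi.single i1 1 with hw
  have hwsp : minkG w w < 0 := by
    apply time0_spacelike (Pi.single_eq_of_ne h0i1 1)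
    intro h; have := congrFun h i1; rw [Pi.single_eq_same] at this; simpa using this
  obtain ⟨T₀, hT₀0, hT₀⟩ := spacelike_combo' x hwsp
  have hsp_T : minkG (T₀ • w) (T₀ • w) < 0 := sp_smul hwsp (ne_of_gt hT₀0)
  have hsp_x : minkG (x - T₀ • w) (x - T₀ • w) < 0 := (hT₀ T₀ le_rfl).2
  have hx : x = T₀ • w + (x - T₀ • w) := by module
  calc E (c • x) = E (c • (T₀ • w) + c • (x - T₀ • w)) := by
        rw [show c • (T₀ • w) + c • (x - T₀ • w) = c • x by module]
    _ = E (c • (T₀ • w)) + E (c • (x - T₀ • w)) := addAll hIff hE0 _ _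
    _ = c • E (T₀ • w) + c • E (x - T₀ • w) := by
        rw [homSp hIff hE0 _ hsp_T c, homSp hIff hE0 _ hsp_x c]
    _ = c • (E (T₀ • w) + E (x - T₀ • w)) := by module
    _ = c • E x := by rw [← addGen hIff hE0 hsp_T (x - T₀ • w), ← hx]


lemma g_sum_right (x : (Fin (m+3) → ℝ)) {ι : Type*} (s : Finset ι) (f : ι → (Fin (m+3) → ℝ)) :
    minkG x (∑ i ∈ s, f i) = ∑ i ∈ s, minkG x (f i) :=
  map_sum (gLin x) f s

end Alx

theorem alexandrov (m : ℕ)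
    (F : (Fin (m + 3) → ℝ) ≃ (Fin (m + 3) → ℝ))
    (hF : ∀ p q, minkG (p - q) (p - q) = 0 →
      minkG (F p - F q) (F p - F q) = 0 ∧
      minkG (F.symm p - F.symm q) (F.symm p - F.symm q) = 0) :
    ∃ (lam : ℝ) (mm : Fin (m + 3) → ℝ)
      (Λ : (Fin (m + 3) → ℝ) →ₗ[ℝ] (Fin (m + 3) → ℝ)),
      0 < lam ∧
      (∀ v w, minkG (Λ v) (Λ w) = minkG v w) ∧
      ∀ p, F p = lam • Λ p + mm := by
  classical
  open Alx in
  -- normalize so that the map fixes the origin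
  set E : (Fin (m+3) → ℝ) ≃ (Fin (m+3) → ℝ) := F.trans (Equiv.subRight (F 0)) with hEdef
  have hEap : ∀ p, E p = F p - F 0 := fun p => rfl
  have hIff : Alx.PresIff E := by
    intro p q
    have hsub : E p - E q = F p - F q := by rw [hEap, hEap]; module
    constructor
    · intro h; rw [hsub]; exact (hF p q h).1
    · intro h
      rw [hsub] at h
      have h2 := (hF (F p) (F q) h).2
      simpa using h2
  have hE0 : E 0 = 0 := by rw [hEap]; exact sub_self _
  -- the map is linear
  set A : (Fin (m+3) → ℝ) →ₗ[ℝ] (Fin (m+3) → ℝ) :=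
    { toFun := fun x => E x,
      map_add' := Alx.addAll hIff hE0,
      map_smul' := fun c x => Alx.homAll hIff hE0 c x } with hA
  have hAap : ∀ x, A x = E x := fun _ => rfl
  have hnull : ∀ x, minkG x x = 0 ↔ minkG (A x) (A x) = 0 := by
    intro x
    have h := hIff x 0
    rw [sub_zero, hE0, sub_zero] at h
    exact h
  -- the standard basis
  set e : Fin (m+3) → (Fin (m+3) → ℝ) := fun i => Pi.single i 1 with he
  have gee : ∀ i j : Fin (m+3), minkG (e i) (e j)
      = if i = j then (if (i:ℕ) = 0 then 1 else -1) else 0 := by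
    intro i j
    rw [he]
    simp only []
    rw [Alx.g_single_left]
    by_cases hij : i = j
    · subst hij
      rw [Pi.single_eq_same]
      simp
    · rw [Pi.single_eq_of_ne hij]
      simp [hij]
  set cc := minkG (A (e 0)) (A (e 0)) with hcc
  -- image matrix coefficients
  have h0i : ∀ i : Fin (m+3), i ≠ 0 →
      minkG (A (e 0)) (A (e i)) = 0 ∧ minkG (A (e i)) (A (e i)) = -cc := by
    intro i hi
    have hival : ¬((i:ℕ) = 0) := fun h => hi (Fin.ext (by simpa using h))
    have hplus : minkG (e 0 + e i) (e 0 + e i) = 0 := by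
      simp only [Alx.g_add_left, Alx.g_add_right, gee]
      simp [hi, Ne.symm hi, hival]
    have hminus : minkG (e 0 - e i) (e 0 - e i) = 0 := by
      simp only [Alx.g_sub_left, Alx.g_sub_right, gee]
      simp [hi, Ne.symm hi, hival]
    have hip := (hnull _).1 hplus
    rw [map_add] at hip
    have him := (hnull _).1 hminus
    rw [map_sub] at him
    simp only [Alx.g_add_left, Alx.g_add_right, Alx.g_sub_left, Alx.g_sub_right] at hip him
    have hco : minkG (A (e i)) (A (e 0)) = minkG (A (e 0)) (A (e i)) := Alx.g_comm _ _
    constructor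
    · linarith [hip, him, hco]
    · have := hcc
      linarith [hip, him, hco]
  have hij0 : ∀ i j : Fin (m+3), i ≠ 0 → j ≠ 0 → i ≠ j →
      minkG (A (e i)) (A (e j)) = 0 := by
    intro i j hi hj hij
    have hival : ¬((i:ℕ) = 0) := fun h => hi (Fin.ext (by simpa using h))
    have hjval : ¬((j:ℕ) = 0) := fun h => hj (Fin.ext (by simpa using h))
    have hs2 : Real.sqrt 2 * Real.sqrt 2 = 2 := Real.mul_self_sqrt (by norm_num)
    have hwnull : minkG (Real.sqrt 2 • e 0 + e i + e j) (Real.sqrt 2 • e 0 + e i + e j) = 0 := by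
      simp only [Alx.g_add_left, Alx.g_add_right, Alx.g_smul_left, Alx.g_smul_right, gee]
      simp [hi, hj, hij, Ne.symm hi, Ne.symm hj, Ne.symm hij, hival, hjval]
      norm_num
    have him := (hnull _).1 hwnull
    rw [map_add, map_add, map_smul] at him
    simp only [Alx.g_add_left, Alx.g_add_right, Alx.g_smul_left, Alx.g_smul_right,
      RingHom.id_apply] at him
    have c1 := (h0i i hi).1
    have c2 := (h0i j hj).1
    have c3 := (h0i i hi).2
    have c4 := (h0i j hj).2
    have hcom1 : minkG (A (e i)) (A (e 0)) = 0 := by rw [Alx.g_comm]; exact c1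
    have hcom2 : minkG (A (e j)) (A (e 0)) = 0 := by rw [Alx.g_comm]; exact c2
    have hcom3 : minkG (A (e j)) (A (e i)) = minkG (A (e i)) (A (e j)) := Alx.g_comm _ _
    rw [c1, c2, c3, c4, hcom1, hcom2, hcom3, ← hcc] at him
    have h2cc : Real.sqrt 2 * (Real.sqrt 2 * cc) = 2 * cc := by rw [← mul_assoc, hs2]
    linarith [him, h2cc]
  have Hval : ∀ i j : Fin (m+3), minkG (A (e i)) (A (e j))
      = if i = j then (if (i:ℕ) = 0 then cc else -cc) else 0 := by
    intro i j
    by_cases hij : i = j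
    · subst hij
      by_cases hi0 : i = 0
      · subst hi0; simp [hcc]
      · have hival : ¬((i:ℕ) = 0) := fun h => hi0 (Fin.ext (by simpa using h))
        simp [hival, (h0i i hi0).2]
    · by_cases hi0 : i = 0
      · subst hi0
        have hj0 : j ≠ 0 := fun h => hij h.symm
        simp [hij, (h0i j hj0).1]
      · by_cases hj0 : j = 0
        · subst hj0
          rw [Alx.g_comm]
          simp [hij, (h0i i hi0).1]
        · simp [hij, hij0 i j hi0 hj0 hij]
  -- decomposition in the basis
  have hsum : ∀ v : Fin (m+3) → ℝ, v = ∑ i, (v i) • e i := by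
    intro v
    have h1 : ∀ i, (v i) • e i = Pi.single i (v i) := by
      intro i
      funext j
      rw [he]
      simp only [Pi.smul_apply, smul_eq_mul, Pi.single_apply]
      split <;> ring
    calc v = ∑ i, Pi.single i (v i) := (Finset.univ_sum_single v).symm
      _ = ∑ i, (v i) • e i := by
          apply Finset.sum_congr rfl; intro i _; rw [h1 i]
  -- the image bilinear form is cc times the original
  have hexp : ∀ v w : Fin (m+3) → ℝ, minkG (A v) (A w) = cc * minkG v w := by
    intro v w
    have hAw : A w = ∑ j, (w j) • A (e j) := by
      conv_lhs => rw [hsum w]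
      rw [map_sum]
      apply Finset.sum_congr rfl; intro j _; rw [map_smul]
    have hAv : A v = ∑ i, (v i) • A (e i) := by
      conv_lhs => rw [hsum v]
      rw [map_sum]
      apply Finset.sum_congr rfl; intro i _; rw [map_smul]
    rw [hAw, Alx.g_sum_right]
    have hterm : ∀ j : Fin (m+3), minkG (A v) ((w j) • A (e j))
        = w j * v j * (if (j:ℕ) = 0 then cc else -cc) := by
      intro j
      rw [Alx.g_smul_right, Alx.g_comm (A v), hAv, Alx.g_sum_right]
      have hterm2 : ∀ i : Fin (m+3), minkG (A (e j)) ((v i) • A (e i))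
          = v i * (if j = i then (if (j:ℕ) = 0 then cc else -cc) else 0) := by
        intro i
        rw [Alx.g_smul_right, Hval j i]
      rw [Finset.sum_congr rfl (fun i _ => hterm2 i)]
      rw [Finset.sum_eq_single j]
      · simp
        split <;> ring
      · intro i _ hne
        simp [Ne.symm hne]
      · simp
    rw [Finset.sum_congr rfl (fun j _ => hterm j)]
    unfold minkG
    rw [Finset.mul_sum]
    apply Finset.sum_congr rfl
    intro j _
    split <;> ring
  -- positivity of cc
  have hsurjA : ∀ y, A (E.symm y) = y := fun y => by rw [hAap]; simp
  have key : ∀ y z : Fin (m+3) → ℝ, cc * minkG (E.symm y) (E.symm z) = minkG y z := by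
    intro y z
    rw [← hexp, hsurjA, hsurjA]
  set i1 : Fin (m+3) := ⟨1, by omega⟩ with hi1
  set i2 : Fin (m+3) := ⟨2, by omega⟩ with hi2
  have hi10 : i1 ≠ 0 := by simp [hi1, Fin.ext_iff]
  have hi20 : i2 ≠ 0 := by simp [hi2, Fin.ext_iff]
  have hi12 : i1 ≠ i2 := by simp [hi1, hi2, Fin.ext_iff]
  have hg00 : minkG (e 0) (e 0) = 1 := by rw [gee]; simp
  have hg11 : minkG (e i1) (e i1) = -1 := by
    rw [gee]; simp [show ((i1:Fin (m+3)):ℕ) = 1 from rfl]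
  have hg22 : minkG (e i2) (e i2) = -1 := by
    rw [gee]; simp [show ((i2:Fin (m+3)):ℕ) = 2 from rfl]
  have hg12 : minkG (e i1) (e i2) = 0 := by rw [gee]; simp [hi12]
  have hc0 := key (e 0) (e 0)
  have hc1 := key (e i1) (e i1)
  have hc2 := key (e i2) (e i2)
  have hc12 := key (e i1) (e i2)
  rw [hg00] at hc0
  rw [hg11] at hc1
  rw [hg22] at hc2
  rw [hg12] at hc12
  have hccne : cc ≠ 0 := by
    intro h; rw [h, zero_mul] at hc0; norm_num at hc0
  have hccpos : 0 < cc := by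
    rcases lt_trichotomy cc 0 with h | h | h
    · exfalso
      have hp1 : 0 < minkG (E.symm (e i1)) (E.symm (e i1)) := by nlinarith [hc1]
      have hp2 : 0 < minkG (E.symm (e i2)) (E.symm (e i2)) := by nlinarith [hc2]
      have hp12 : minkG (E.symm (e i1)) (E.symm (e i2)) = 0 := by
        rcases mul_eq_zero.1 hc12 with h' | h'
        · exact absurd h' hccne
        · exact h'
      exact Alx.pos_orth hp1 hp2 hp12
    · exact absurd h hccne
    · exact h
  -- conclusion
  set lam := Real.sqrt cc with hlam
  have hlampos : 0 < lam := Real.sqrt_pos.2 hccpos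
  have hlamne : lam ≠ 0 := ne_of_gt hlampos
  have hll : lam * lam = cc := Real.mul_self_sqrt (le_of_lt hccpos)
  refine ⟨lam, F 0, lam⁻¹ • A, hlampos, ?_, ?_⟩
  · intro v w
    rw [LinearMap.smul_apply, LinearMap.smul_apply, Alx.g_smul_left, Alx.g_smul_right, hexp,
      ← hll]
    field_simp
  · intro p
    rw [LinearMap.smul_apply, smul_smul, mul_inv_cancel₀ hlamne, one_smul]
    rw [show A p = F p - F 0 from rfl]
    module
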